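/- (Lemma, part 2) Let p ≥ n, τ > 0, X ∈ ℝ^{n×p} with skinny SVD X = UDVᵀ, and F_τ = U(D²+τI)^{−1/2}Uᵀ. Then the ridge regression estimator satisfies (XᵀX + τI_p)⁻¹XᵀY = (F_τX)ᵀF_τY for every Y ∈ ℝⁿ. -/

import Mathlib

open Matrix

/-- (Lemma, part 2) The ridge estimator satisfies
`(XᵀX + τI)⁻¹XᵀY = (F_τX)ᵀF_τY`. -/
theorem ridge_eq_puffer_ols
    {n p : ℕ} (hnp : n ≤ p)
    (X : Matrix (Fin n) (Fin p) ℝ) (U : Matrix (Fin n) (Fin n) ℝ)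
    (V : Matrix (Fin p) (Fin n) ℝ) (d : Fin n → ℝ)
    (hU : U * Uᵀ = 1) (hU' : Uᵀ * U = 1) (hV : Vᵀ * V = 1)
    (hX : X = U * Matrix.diagonal d * Vᵀ)
    (tau : ℝ) (htau : 0 < tau)
    (F : Matrix (Fin n) (Fin n) ℝ)
    (hF : F = U * Matrix.diagonal (fun i => (Real.sqrt (d i ^ 2 + tau))⁻¹) * Uᵀ) :
    ∀ Y : Fin n → ℝ,
      (Xᵀ * X + tau • (1 : Matrix (Fin p) (Fin p) ℝ))⁻¹.mulVec (Xᵀ.mulVec Y)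
        = (F * X)ᵀ.mulVec (F.mulVec Y) := by
  intro Y
  set M : Matrix (Fin p) (Fin p) ℝ := Xᵀ * X + tau • (1 : Matrix (Fin p) (Fin p) ℝ) with hM
  have hd : ∀ i, (0:ℝ) < d i ^ 2 + tau := fun i => by positivity
  -- F * F = U * E * Uᵀ with E the diagonal of (dᵢ² + τ)⁻¹
  set E : Matrix (Fin n) (Fin n) ℝ := Matrix.diagonal (fun i => (d i ^ 2 + tau)⁻¹) with hE
  have hdiag : (Matrix.diagonal (fun i => (Real.sqrt (d i ^ 2 + tau))⁻¹)) *
      (Matrix.diagonal (fun i => (Real.sqrt (d i ^ 2 + tau))⁻¹)) = E := by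
    have hfun : (fun i => (Real.sqrt (d i ^ 2 + tau))⁻¹ * (Real.sqrt (d i ^ 2 + tau))⁻¹)
        = (fun i => (d i ^ 2 + tau)⁻¹) := by
      funext i
      rw [← mul_inv, Real.mul_self_sqrt (hd i).le]
    rw [Matrix.diagonal_mul_diagonal, hE, hfun]
  have hFF : F * F = U * E * Uᵀ := by
    rw [hF]
    calc (U * Matrix.diagonal (fun i => (Real.sqrt (d i ^ 2 + tau))⁻¹) * Uᵀ) *
          (U * Matrix.diagonal (fun i => (Real.sqrt (d i ^ 2 + tau))⁻¹) * Uᵀ)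
        = U * (Matrix.diagonal (fun i => (Real.sqrt (d i ^ 2 + tau))⁻¹) * ((Uᵀ * U) *
            (Matrix.diagonal (fun i => (Real.sqrt (d i ^ 2 + tau))⁻¹)))) * Uᵀ := by
          simp only [Matrix.mul_assoc]
      _ = U * E * Uᵀ := by rw [hU', one_mul, hdiag]
  have hFt : Fᵀ = F := by
    rw [hF]
    simp [Matrix.transpose_mul, Matrix.diagonal_transpose, Matrix.mul_assoc]
  have hXt : Xᵀ = V * Matrix.diagonal d * Uᵀ := by
    rw [hX]
    simp [Matrix.transpose_mul, Matrix.diagonal_transpose, Matrix.mul_assoc]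
  -- the key algebraic identity
  have hkey : M * (Xᵀ * (Fᵀ * F)) = Xᵀ := by
    rw [hFt, hFF, hM, hXt, hX]
    have expand : (V * Matrix.diagonal d * Uᵀ) * (U * E * Uᵀ)
        = V * (Matrix.diagonal d * E) * Uᵀ := by
      calc (V * Matrix.diagonal d * Uᵀ) * (U * E * Uᵀ)
          = V * (Matrix.diagonal d * ((Uᵀ * U) * E)) * Uᵀ := by
            simp only [Matrix.mul_assoc]
        _ = V * (Matrix.diagonal d * E) * Uᵀ := by rw [hU', one_mul]
    rw [expand, Matrix.add_mul]
    have h1 : (V * Matrix.diagonal d * Uᵀ) * (U * Matrix.diagonal d * Vᵀ) *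
        (V * (Matrix.diagonal d * E) * Uᵀ)
        = V * (Matrix.diagonal d * Matrix.diagonal d * (Matrix.diagonal d * E)) * Uᵀ := by
      calc (V * Matrix.diagonal d * Uᵀ) * (U * Matrix.diagonal d * Vᵀ) *
            (V * (Matrix.diagonal d * E) * Uᵀ)
          = V * (Matrix.diagonal d * ((Uᵀ * U) * (Matrix.diagonal d * ((Vᵀ * V) *
              (Matrix.diagonal d * E))))) * Uᵀ := by simp only [Matrix.mul_assoc]
        _ = _ := by
            rw [hU', hV, one_mul, one_mul]
            simp only [Matrix.mul_assoc]
    have h2 : tau • (1 : Matrix (Fin p) (Fin p) ℝ) * (V * (Matrix.diagonal d * E) * Uᵀ)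
        = V * (tau • (Matrix.diagonal d * E)) * Uᵀ := by
      rw [Matrix.smul_mul, Matrix.one_mul, Matrix.mul_smul, Matrix.smul_mul]
    rw [h1, h2, ← Matrix.add_mul, ← Matrix.mul_add]
    have hAB : Matrix.diagonal d * Matrix.diagonal d * (Matrix.diagonal d * E)
        + tau • (Matrix.diagonal d * E) = Matrix.diagonal d := by
      rw [hE]
      simp only [Matrix.diagonal_mul_diagonal, ← Matrix.diagonal_smul, ← Matrix.diagonal_add]
      ext i j
      rcases eq_or_ne i j with rfl | hij
      · have h0 : d i ^ 2 + tau ≠ 0 := (hd i).ne'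
        simp only [Matrix.add_apply, Matrix.diagonal_apply_eq, Pi.add_apply, Pi.smul_apply, smul_eq_mul]
        field_simp
      · simp [Matrix.diagonal_apply_ne _ hij]
    rw [hAB]
  -- invertibility of M
  have hMunit : IsUnit M := by
    have hpsd : (Xᵀ * X).PosSemidef := by
      have := Matrix.posSemidef_conjTranspose_mul_self X
      rwa [Matrix.conjTranspose_eq_transpose_of_trivial] at this
    have hpd : (tau • (1 : Matrix (Fin p) (Fin p) ℝ)).PosDef := by
      rw [Matrix.smul_one_eq_diagonal]
      exact Matrix.PosDef.diagonal (fun _ => htau)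
    exact (Matrix.PosDef.posSemidef_add hpsd hpd).isUnit
  have := hMunit.invertible
  have hinv : M⁻¹ * Xᵀ = Xᵀ * (Fᵀ * F) := by
    conv_lhs => rw [← hkey]
    rw [Matrix.inv_mul_cancel_left_of_invertible]
  rw [Matrix.mulVec_mulVec, hinv, Matrix.mulVec_mulVec, Matrix.transpose_mul,
    Matrix.mul_assoc]
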